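/- Let 𝒢 be a monotone (downward-closed) family of subsets of an n-element set such that no subset of cardinality d is k-shattered by 𝒢 (i.e., for no d-element set S does every subset of S appear as G ∩ S for at least k members G of 𝒢). Then for every t with d ≤ t ≤ n, the number of members of 𝒢 of cardinality t is strictly less than k·C(n,d)/C(t,d). -/

import Mathlib

/-- `S` is `k`-shattered by `𝒢`: every subset of `S` arises as `G ∩ S` for at
least `k` members `G` of `𝒢`. -/
def KShattered {n : ℕ} (𝒢 : Finset (Finset (Fin n))) (k : ℕ) (S : Finset (Fin n)) : Prop :=
  ∀ T ⊆ S, k ≤ (𝒢.filter (fun G => G ∩ S = T)).card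

theorem stmt_11 {n d k : ℕ} (𝒢 : Finset (Finset (Fin n)))
    (hmono : ∀ G ∈ 𝒢, ∀ G' ⊆ G, G' ∈ 𝒢)
    (hshat : ∀ S : Finset (Fin n), S.card = d → ¬ KShattered 𝒢 k S) :
    ∀ t : ℕ, d ≤ t → t ≤ n →
      ((𝒢.filter (fun G => G.card = t)).card : ℚ) <
        (k : ℚ) * (Nat.choose n d : ℚ) / (Nat.choose t d : ℚ) := by
  intro t hdt htn
  have hdn : d ≤ n := hdt.trans htn
  -- a set of size d exists
  obtain ⟨S₀, hS₀u, hS₀card⟩ :=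
    Finset.exists_subset_card_eq (s := (Finset.univ : Finset (Fin n))) (by simpa using hdn)
  -- k ≥ 1
  have hk : 1 ≤ k := by
    by_contra hk
    have hk0 : k = 0 := by omega
    exact hshat S₀ hS₀card (fun T _ => by simp [hk0])
  -- key: every d-set is contained in at most k-1 size-t members of 𝒢
  have key : ∀ S : Finset (Fin n), S.card = d →
      (𝒢.filter (fun G => G.card = t ∧ S ⊆ G)).card ≤ k - 1 := by
    intro S hS
    by_contra h
    push_neg at h
    have hkcard : k ≤ (𝒢.filter (fun G => G.card = t ∧ S ⊆ G)).card := by omega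
    apply hshat S hS
    intro T hT
    refine le_trans hkcard ?_
    apply Finset.card_le_card_of_injOn (fun G => (G \ S) ∪ T)
    · intro G hG
      simp only [Finset.mem_coe, Finset.mem_filter] at hG ⊢
      obtain ⟨hG𝒢, hGt, hSG⟩ := hG
      have hsub : (G \ S) ∪ T ⊆ G :=
        Finset.union_subset (Finset.sdiff_subset) (hT.trans hSG)
      refine ⟨hmono G hG𝒢 _ hsub, ?_⟩
      ext x
      simp only [Finset.mem_inter, Finset.mem_union, Finset.mem_sdiff]
      have h1 := @hT x
      constructor
      · rintro ⟨h2 | h2, h3⟩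
        · exact absurd h3 h2.2
        · exact h2
      · intro hx
        exact ⟨Or.inr hx, h1 hx⟩
    · intro a ha b hb hab
      simp only [Finset.coe_filter, Set.mem_setOf_eq, Finset.mem_filter] at ha hb
      have reco : ∀ c : Finset (Fin n), S ⊆ c → ((c \ S) ∪ T) ∪ (S \ T) = c := by
        intro c hc
        ext x
        simp only [Finset.mem_union, Finset.mem_sdiff]
        have h1 := @hT x
        have h2 := @hc x
        constructor
        · rintro ((⟨h, _⟩ | h) | ⟨h, _⟩)
          · exact h
          · exact h2 (h1 h)
          · exact h2 h
        · intro hx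
          by_cases hxS : x ∈ S
          · by_cases hxT : x ∈ T
            · exact Or.inl (Or.inr hxT)
            · exact Or.inr ⟨hxS, hxT⟩
          · exact Or.inl (Or.inl ⟨hx, hxS⟩)
      have hab' : a \ S ∪ T = b \ S ∪ T := hab
      have := reco a ha.2.2
      rw [← this, hab', reco b hb.2.2]
  -- double counting
  set F := 𝒢.filter (fun G => G.card = t) with hF
  set P := (Finset.univ : Finset (Fin n)).powersetCard d with hP
  have hPcard : P.card = n.choose d := by
    simp [hP, Finset.card_powersetCard]
  have hswap : F.card * t.choose d = ∑ S ∈ P, (F.filter (fun G => S ⊆ G)).card := by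
    have step1 : ∀ G ∈ F, (G.powersetCard d).card = t.choose d := by
      intro G hG
      have : G.card = t := (Finset.mem_filter.mp hG).2
      simp [Finset.card_powersetCard, this]
    calc F.card * t.choose d = ∑ G ∈ F, (G.powersetCard d).card := by
            rw [Finset.sum_congr rfl step1]; simp [mul_comm]
      _ = ∑ G ∈ F, (P.filter (fun S => S ⊆ G)).card := by
            apply Finset.sum_congr rfl
            intro G _
            congr 1
            ext S
            simp only [Finset.mem_powersetCard, Finset.mem_filter, hP]
            constructor
            · rintro ⟨h1, h2⟩; exact ⟨⟨h1.trans (Finset.subset_univ G), h2⟩, h1⟩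
            · rintro ⟨⟨_, h2⟩, h3⟩; exact ⟨h3, h2⟩
      _ = ∑ G ∈ F, ∑ S ∈ P, if S ⊆ G then 1 else 0 := by
            refine Finset.sum_congr rfl fun G _ => ?_
            rw [Finset.card_filter]
      _ = ∑ S ∈ P, ∑ G ∈ F, if S ⊆ G then 1 else 0 := Finset.sum_comm
      _ = ∑ S ∈ P, (F.filter (fun G => S ⊆ G)).card := by
            refine Finset.sum_congr rfl fun S _ => ?_
            rw [Finset.card_filter]
  have hbound : F.card * t.choose d ≤ (k - 1) * n.choose d := by
    rw [hswap]
    calc ∑ S ∈ P, (F.filter (fun G => S ⊆ G)).card ≤ ∑ _S ∈ P, (k - 1) := by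
          apply Finset.sum_le_sum
          intro S hSp
          have hSd : S.card = d := (Finset.mem_powersetCard.mp hSp).2
          have : F.filter (fun G => S ⊆ G) = 𝒢.filter (fun G => G.card = t ∧ S ⊆ G) := by
            rw [hF, Finset.filter_filter]
          rw [this]
          exact key S hSd
      _ = (k - 1) * n.choose d := by rw [Finset.sum_const, hPcard, smul_eq_mul, mul_comm]
  -- conclude in ℚ
  have hchtd : 0 < t.choose d := Nat.choose_pos hdt
  have hchnd : 0 < n.choose d := Nat.choose_pos hdn
  have hchtdQ : (0 : ℚ) < (t.choose d : ℚ) := by exact_mod_cast hchtd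
  rw [lt_div_iff₀ hchtdQ]
  have hnat : F.card * t.choose d < k * n.choose d := by
    calc F.card * t.choose d ≤ (k - 1) * n.choose d := hbound
      _ < k * n.choose d := by
          apply Nat.mul_lt_mul_of_lt_of_le (by omega) (le_refl _) hchnd
  exact_mod_cast hnat
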